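/- Let a, c ∈ ℝ and let z : ℤ → ℝ → ℝ be a family of differentiable functions satisfying for all n ∈ ℤ and t ∈ ℝ the equation ż_n = (z_{n+2} − z_n + a)(z_{n+1} − z_{n−1} + a)(z_n − z_{n−2} + a) + c. Define u_n(t) = (z_{n+3}(t) − z_{n+1}(t) + a)(z_{n+2}(t) − z_n(t) + a). Then for all n ∈ ℤ and t ∈ ℝ, u̇_n = u_n (u_{n+2} + u_{n+1} − u_{n−1} − u_{n−2}), i.e., u solves the INB equation. -/

import Mathlib

/-- Equation `żₙ = (z_{n+2}−zₙ+a)(z_{n+1}−z_{n−1}+a)(zₙ−z_{n−2}+a) + c` is transformed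
into the INB equation by `uₙ = (z_{n+3}−z_{n+1}+a)(z_{n+2}−zₙ+a)`. -/
theorem stmt_13 (a c : ℝ) (z : ℤ → ℝ → ℝ)
    (hz : ∀ (n : ℤ) (t : ℝ), HasDerivAt (z n)
      ((z (n + 2) t - z n t + a) * (z (n + 1) t - z (n - 1) t + a)
        * (z n t - z (n - 2) t + a) + c) t)
    (u : ℤ → ℝ → ℝ)
    (hu : ∀ (n : ℤ) (t : ℝ),
      u n t = (z (n + 3) t - z (n + 1) t + a) * (z (n + 2) t - z n t + a)) :
    ∀ (n : ℤ) (t : ℝ), HasDerivAt (u n)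
      (u n t * (u (n + 2) t + u (n + 1) t - u (n - 1) t - u (n - 2) t)) t := by
  intro n t
  have hfun : u n = fun s => (z (n + 3) s - z (n + 1) s + a) * (z (n + 2) s - z n s + a) :=
    funext fun s => hu n s
  rw [hfun]
  have key := (((hz (n+3) t).sub (hz (n+1) t)).add_const a).mul
    (((hz (n+2) t).sub (hz n t)).add_const a)
  convert key using 1
  · rfl
  · rfl
  · rfl
  simp only [hu, Pi.sub_apply,
    show (n+3+2:ℤ)=n+5 by ring, show (n+3+1:ℤ)=n+4 by ring,
    show (n+3-1:ℤ)=n+2 by ring, show (n+3-2:ℤ)=n+1 by ring,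
    show (n+1+2:ℤ)=n+3 by ring, show (n+1+1:ℤ)=n+2 by ring,
    show (n+1-1:ℤ)=n by ring, show (n+1-2:ℤ)=n-1 by ring,
    show (n+2+2:ℤ)=n+4 by ring, show (n+2+1:ℤ)=n+3 by ring,
    show (n+2-1:ℤ)=n+1 by ring, show (n+2-2:ℤ)=n by ring,
    show (n+2+3:ℤ)=n+5 by ring, show (n+1+3:ℤ)=n+4 by ring,
    show (n-1+3:ℤ)=n+2 by ring, show (n-1+2:ℤ)=n+1 by ring,
    show (n-1+1:ℤ)=n by ring, show (n-2+3:ℤ)=n+1 by ring,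
    show (n-2+2:ℤ)=n by ring, show (n-2+1:ℤ)=n-1 by ring]
  ring
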